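/- The function d(A,B) = (1 − m(A,B)m(B,A))/(1 + m(A,B)m(B,A)) is a metric on 𝕊_D and satisfies: (1) (1/2)‖A−B‖ ≤ d(A,B) ≤ 1 for all A,B ∈ 𝕊_D; (2) d(A,B) < 1 for A,B ∈ 𝕊_D°; (3) if A ∈ 𝕊_D°, then d(A,B) = 1 if and only if B ∈ 𝕊_D \ 𝕊_D°. -/

import Mathlib

open MeasureTheory Matrix Filter
open scoped BigOperators ENNReal NNReal ComplexOrder

noncomputable section

abbrev Mat (D : ℕ) := Matrix (Fin D) (Fin D) ℂ

instance {D : ℕ} : MeasurableSpace (Mat D) := MeasurableSpace.pi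

def traceNorm {D : ℕ} (A : Mat D) : ℝ :=
  (((Matrix.posSemidef_conjTranspose_mul_self A).1.eigenvectorUnitary : Mat D) *
    diagonal (fun i => ((Real.sqrt ((Matrix.posSemidef_conjTranspose_mul_self A).1.eigenvalues i) : ℝ) : ℂ)) *
    (star (Matrix.posSemidef_conjTranspose_mul_self A).1.eigenvectorUnitary : Mat D)).trace.re

def SD (D : ℕ) : Set (Mat D) := {A | A.PosSemidef ∧ A.trace = 1}
def SDo (D : ℕ) : Set (Mat D) := {A | A.PosDef ∧ A.trace = 1}

abbrev MapM (D : ℕ) := Mat D →ₗ[ℂ] Mat D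

def IsPositiveMap {D : ℕ} (φ : MapM D) : Prop := ∀ A : Mat D, A.PosSemidef → (φ A).PosSemidef
def IsStrictlyPositiveMap {D : ℕ} (φ : MapM D) : Prop := ∀ A ∈ SD D, (φ A).PosDef

def opNorm {D : ℕ} (φ : MapM D) : ℝ :=
  sSup {x | ∃ A : Mat D, traceNorm A = 1 ∧ x = traceNorm (φ A)}

def vval {D : ℕ} (φ : MapM D) : ℝ := sInf {x | ∃ A ∈ SD D, x = traceNorm (φ A)}

def mcoef {D : ℕ} (A B : Mat D) : ℝ := sSup {l : ℝ | (A - (l : ℂ) • B).PosSemidef}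

def dmet {D : ℕ} (A B : Mat D) : ℝ :=
  (1 - mcoef A B * mcoef B A) / (1 + mcoef A B * mcoef B A)

def NonDestructive {D : ℕ} (φ : MapM D) : Prop := ∀ A ∈ SD D, φ A ≠ 0

def hsAdjoint {D : ℕ} (φ : MapM D) : MapM D where
  toFun A := Matrix.of fun i j => ((φ (Matrix.single i j 1))ᴴ * A).trace
  map_add' A B := by
    ext i j
    simp [Matrix.mul_add]
  map_smul' c A := by
    ext i j
    simp [Matrix.mul_smul]

def NonTransient {D : ℕ} (φ : MapM D) : Prop := NonDestructive (hsAdjoint φ)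

def projAct {D : ℕ} (φ : MapM D) (X : Mat D) : Mat D := ((φ X).trace)⁻¹ • φ X

def ccoef {D : ℕ} (φ : MapM D) : ℝ :=
  sSup {x | ∃ A ∈ SD D, ∃ B ∈ SD D, x = dmet (projAct φ A) (projAct φ B)}

def IsRightPF {D : ℕ} (φ : MapM D) (R : Mat D) : Prop :=
  R ∈ SD D ∧ ∃ Λ : ℝ, 0 < Λ ∧ φ R = (Λ : ℂ) • R ∧
    spectralRadius ℂ (φ : Module.End ℂ (Mat D)) = ENNReal.ofReal Λ

def IsLeftPF {D : ℕ} (φ : MapM D) (L : Mat D) : Prop :=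
  L ∈ SD D ∧ ∃ Λ : ℝ, 0 < Λ ∧ hsAdjoint φ L = (Λ : ℂ) • L ∧
    spectralRadius ℂ (φ : Module.End ℂ (Mat D)) = ENNReal.ofReal Λ

/-- `prodFrom φ0 θ a n ω = φ_n ∘ ⋯ ∘ φ_{a+1}` (identity if `n ≤ a`), where `φ_k = φ0 ∘ θ^k`. -/
def prodFrom {D : ℕ} {Ω : Type*} (φ0 : Ω → MapM D) (θ : Ω → Ω) (a : ℕ) : ℕ → Ω → MapM D
  | 0, _ => LinearMap.id
  | n+1, ω => if n+1 ≤ a then LinearMap.id else (φ0 (θ^[n+1] ω)) ∘ₗ prodFrom φ0 θ a n ω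

/-- `Φ^{(n)} = φ_n ∘ ⋯ ∘ φ_1`. -/
def PhiSeq {D : ℕ} {Ω : Type*} (φ0 : Ω → MapM D) (θ : Ω → Ω) (n : ℕ) (ω : Ω) : MapM D :=
  prodFrom φ0 θ 0 n ω

/-- Assumption 1 : the sequence `Φ^{(n)}` is almost surely eventually strictly positive. -/
def Assumption1 {D : ℕ} {Ω : Type*} [MeasurableSpace Ω] (μ : Measure Ω)
    (φ0 : Ω → MapM D) (θ : Ω → Ω) : Prop :=
  ∀ᵐ ω ∂μ, ∃ n : ℕ, 1 ≤ n ∧ ∀ k : ℕ, IsStrictlyPositiveMap (PhiSeq φ0 θ (n + k) ω)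

/-- iteration of `θ` (for `k ≥ 0`) resp. its inverse `θ'` (for `k < 0`). -/
def zIter {Ω : Type*} (θ θ' : Ω → Ω) : ℤ → Ω → Ω
  | Int.ofNat n, ω => θ^[n] ω
  | Int.negSucc n, ω => θ'^[n+1] ω

/-- `Ψ^{(n)} = ψ_n ∘ ⋯ ∘ ψ_1` where `ψ_k = φ_{-k}*`. -/
def PsiSeq {D : ℕ} {Ω : Type*} (φ0 : Ω → MapM D) (θ' : Ω → Ω) : ℕ → Ω → MapM D
  | 0, _ => LinearMap.id
  | n+1, ω => hsAdjoint (φ0 (θ'^[n+1] ω)) ∘ₗ PsiSeq φ0 θ' n ω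

/-- `Φ^{(-m)} = φ_{-1} ∘ ⋯ ∘ φ_{-m}` (indexed by `m ≥ 1`). -/
def PhiNeg {D : ℕ} {Ω : Type*} (φ0 : Ω → MapM D) (θ' : Ω → Ω) : ℕ → Ω → MapM D
  | 0, _ => LinearMap.id
  | m+1, ω => PhiNeg φ0 θ' m ω ∘ₗ (φ0 (θ'^[m+1] ω))

/-- `compDown f k j = f_k ∘ f_{k+1} ∘ ⋯ ∘ f_{k+j}`. -/
def compDown {D : ℕ} {Ω : Type*} (f : ℕ → Ω → MapM D) (k : ℕ) : ℕ → Ω → MapM D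
  | 0, ω => f k ω
  | j+1, ω => compDown f k j ω ∘ₗ f (k+j+1) ω

/-- the σ-algebra generated by `(φ_k)_{k ≥ n}`. -/
def sigmaUp {D : ℕ} {Ω : Type*} (φ0 : Ω → MapM D) (θ θ' : Ω → Ω) (n : ℤ) :
    MeasurableSpace Ω :=
  ⨆ (k : ℤ) (_ : n ≤ k) (A : Mat D),
    MeasurableSpace.comap (fun ω => φ0 (zIter θ θ' k ω) A) inferInstance

/-- the σ-algebra generated by `(φ_j)_{j ≤ k}`. -/
def sigmaLow {D : ℕ} {Ω : Type*} (φ0 : Ω → MapM D) (θ θ' : Ω → Ω) (k : ℤ) :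
    MeasurableSpace Ω :=
  ⨆ (j : ℤ) (_ : j ≤ k) (A : Mat D),
    MeasurableSpace.comap (fun ω => φ0 (zIter θ θ' j ω) A) inferInstance

/-- Assumption 2 : `E[|ln‖φ₀*‖|] < ∞` and `E[|ln v(φ₀*)|] < ∞`. -/
def Assumption2 {D : ℕ} {Ω : Type*} [MeasurableSpace Ω] (μ : Measure Ω)
    (φ0 : Ω → MapM D) : Prop :=
  Integrable (fun ω => Real.log (opNorm (hsAdjoint (φ0 ω)))) μ ∧
  Integrable (fun ω => Real.log (vval (hsAdjoint (φ0 ω)))) μ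

/-- Assumption 2_p : `ln‖φ₀*‖` and `ln v(φ₀*)` are in `L^p`. -/
def Assumption2p {D : ℕ} {Ω : Type*} [MeasurableSpace Ω] (μ : Measure Ω)
    (φ0 : Ω → MapM D) (p : ℝ) : Prop :=
  MemLp (fun ω => Real.log (opNorm (hsAdjoint (φ0 ω)))) (ENNReal.ofReal p) μ ∧
  MemLp (fun ω => Real.log (vval (hsAdjoint (φ0 ω)))) (ENNReal.ofReal p) μ

section AuxStmt1

variable {D : ℕ}

lemma psd_trace_nonneg {A : Mat D} (hA : A.PosSemidef) : 0 ≤ A.trace := by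
  have h : ∀ i, 0 ≤ A i i := fun i => by
    simpa [dotProduct, Pi.single_apply] using hA.dotProduct_mulVec_nonneg (Pi.single i 1)
  exact Finset.sum_nonneg fun i _ => h i

lemma psd_smul {A : Mat D} (hA : A.PosSemidef) {c : ℝ} (hc : 0 ≤ c) :
    ((c : ℂ) • A).PosSemidef := by
  refine PosSemidef.of_dotProduct_mulVec_nonneg ?_ ?_
  · unfold Matrix.IsHermitian
    rw [conjTranspose_smul, hA.1, Complex.star_def, Complex.conj_ofReal]
  · intro x
    rw [smul_mulVec, dotProduct_smul]
    exact mul_nonneg (by exact_mod_cast hc) (hA.dotProduct_mulVec_nonneg x)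


lemma zero_mem_mset {A B : Mat D} (hA : A.PosSemidef) :
    (0:ℝ) ∈ {l : ℝ | (A - (l : ℂ) • B).PosSemidef} := by
  simpa using hA

lemma mset_le_one {A B : Mat D} (hA : A ∈ SD D) (hB : B ∈ SD D)
    {l : ℝ} (hl : (A - (l : ℂ) • B).PosSemidef) : l ≤ 1 := by
  have := psd_trace_nonneg hl
  rw [trace_sub, trace_smul, hA.2, hB.2, smul_eq_mul, mul_one] at this
  have h2 : (0:ℂ) ≤ ((1 - l : ℝ) : ℂ) := by push_cast; exact this
  rw [Complex.zero_le_real] at h2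
  linarith

lemma mset_bddAbove {A B : Mat D} (hA : A ∈ SD D) (hB : B ∈ SD D) :
    BddAbove {l : ℝ | (A - (l : ℂ) • B).PosSemidef} :=
  ⟨1, fun l hl => mset_le_one hA hB hl⟩

lemma mcoef_nonneg {A B : Mat D} (hA : A ∈ SD D) (hB : B ∈ SD D) : 0 ≤ mcoef A B :=
  le_csSup (mset_bddAbove hA hB) (zero_mem_mset hA.1)

lemma mcoef_le_one {A B : Mat D} (hA : A ∈ SD D) (hB : B ∈ SD D) : mcoef A B ≤ 1 :=
  csSup_le ⟨0, zero_mem_mset hA.1⟩ fun _ hl => mset_le_one hA hB hl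

lemma mcoef_mem {A B : Mat D} (hA : A ∈ SD D) (hB : B ∈ SD D) :
    (A - ((mcoef A B : ℝ) : ℂ) • B).PosSemidef := by
  have hherm : ∀ l : ℝ, (A - (l:ℂ) • B).IsHermitian := fun l => by
    apply IsHermitian.sub hA.1.1
    unfold Matrix.IsHermitian
    rw [conjTranspose_smul, hB.1.1, Complex.star_def, Complex.conj_ofReal]
  refine PosSemidef.of_dotProduct_mulVec_nonneg (hherm _) fun x => ?_
  set a : ℂ := dotProduct (star x) (A *ᵥ x) with ha
  set b : ℂ := dotProduct (star x) (B *ᵥ x) with hb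
  have hform : ∀ l : ℝ, dotProduct (star x) ((A - (l:ℂ) • B) *ᵥ x) = a - (l:ℂ) * b := by
    intro l
    rw [sub_mulVec, dotProduct_sub, smul_mulVec, dotProduct_smul, smul_eq_mul]
  rw [hform]
  have ha0 : 0 ≤ a := hA.1.dotProduct_mulVec_nonneg x
  have hb0 : 0 ≤ b := hB.1.dotProduct_mulVec_nonneg x
  obtain ⟨har, hai⟩ := Complex.nonneg_iff.mp ha0
  obtain ⟨hbr, hbi⟩ := Complex.nonneg_iff.mp hb0
  have hae : a = (a.re : ℂ) := Complex.ext rfl (by simp [← hai])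
  have hbe : b = (b.re : ℂ) := Complex.ext rfl (by simp [← hbi])
  rw [hae, hbe, ← Complex.ofReal_mul, ← Complex.ofReal_sub, Complex.zero_le_real]
  rcases eq_or_lt_of_le hbr with hbz | hbz
  · rw [← hbz, mul_zero, sub_zero]; exact har
  · have hub : ∀ l ∈ {l : ℝ | (A - (l:ℂ) • B).PosSemidef}, l ≤ a.re / b.re := by
      intro l hl
      have := hl.dotProduct_mulVec_nonneg x
      rw [hform] at this
      rw [hae, hbe, ← Complex.ofReal_mul, ← Complex.ofReal_sub, Complex.zero_le_real] at this
      rw [le_div_iff₀ hbz]; linarith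
    have := csSup_le ⟨0, zero_mem_mset hA.1⟩ hub
    have h2 : mcoef A B * b.re ≤ a.re := by
      rw [← le_div_iff₀ hbz]; exact this
    linarith

lemma psd_neg_eq_zero {M : Mat D} (hM : M.PosSemidef) (hM' : (-M).PosSemidef) : M = 0 := by
  have hz : ∀ x, M *ᵥ x = 0 := by
    intro x
    rw [← hM.dotProduct_mulVec_zero_iff x]
    refine le_antisymm ?_ (hM.dotProduct_mulVec_nonneg x)
    have := hM'.dotProduct_mulVec_nonneg x
    rw [neg_mulVec, dotProduct_neg] at this
    exact neg_nonneg.mp this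
  ext i j
  have := congrFun (hz (Pi.single j 1)) i
  simpa [mulVec_single] using this

open scoped MatrixOrder in
lemma trace_mul_psd_nonneg {P Q : Mat D} (hP : P.PosSemidef) (hQ : Q.PosSemidef) :
    0 ≤ (P * Q).trace := by
  obtain ⟨s, hs, hss⟩ : ∃ s : Mat D, s.PosSemidef ∧ s * s = P :=
    ⟨CFC.sqrt P, nonneg_iff_posSemidef.mp (CFC.sqrt_nonneg P), CFC.sqrt_mul_sqrt_self P (nonneg_iff_posSemidef.mpr hP)⟩
  have h1 : (P * Q).trace = (s * Q * s).trace := by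
    rw [← hss, mul_assoc, trace_mul_comm]
  rw [h1, show s * Q * s = s * Q * sᴴ by rw [hs.1]]
  exact psd_trace_nonneg (hQ.mul_mul_conjTranspose_same s)

lemma mcoef_mul_le_one {A B : Mat D} (hA : A ∈ SD D) (hB : B ∈ SD D) :
    mcoef A B * mcoef B A ≤ 1 := by
  set l := mcoef A B
  set m := mcoef B A
  have hl0 : 0 ≤ l := mcoef_nonneg hA hB
  have key : (((1 - l*m : ℝ)) : ℂ) • A = (A - (l:ℂ) • B) + (l:ℂ) • (B - (m:ℂ) • A) := by
    push_cast
    module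
  have hpsd : ((((1 - l*m : ℝ)) : ℂ) • A).PosSemidef := by
    rw [key]
    exact (mcoef_mem hA hB).add (psd_smul (mcoef_mem hB hA) hl0)
  have := psd_trace_nonneg hpsd
  rw [trace_smul, hA.2, smul_eq_mul, mul_one, Complex.zero_le_real] at this
  linarith

lemma mcoef_eq_one_of_mul_eq_one {A B : Mat D} (hA : A ∈ SD D) (hB : B ∈ SD D)
    (h : mcoef A B * mcoef B A = 1) : A = B := by
  set l := mcoef A B with hldef
  set m := mcoef B A
  have hl0 : 0 ≤ l := mcoef_nonneg hA hB
  have key : (((1 - l*m : ℝ)) : ℂ) • A = (A - (l:ℂ) • B) + (l:ℂ) • (B - (m:ℂ) • A) := by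
    push_cast
    module
  rw [h] at key
  have hPz : A - (l:ℂ) • B = 0 := by
    apply psd_neg_eq_zero (mcoef_mem hA hB)
    have : -(A - (l:ℂ) • B) = (l:ℂ) • (B - (m:ℂ) • A) := by
      have h0 : (A - (l:ℂ) • B) + (l:ℂ) • (B - (m:ℂ) • A) = 0 := by
        rw [← key]; simp
      exact (add_eq_zero_iff_neg_eq.mp h0)
    rw [this]
    exact psd_smul (mcoef_mem hB hA) hl0
  have hAB : A = (l:ℂ) • B := by rwa [sub_eq_zero] at hPz
  have htr : (1:ℂ) = (l:ℂ) := by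
    have := congrArg Matrix.trace hAB
    rwa [hA.2, trace_smul, hB.2, smul_eq_mul, mul_one] at this
  rw [hAB, ← htr, one_smul]

lemma mcoef_self {A : Mat D} (hA : A ∈ SD D) : mcoef A A = 1 := by
  refine le_antisymm (mcoef_le_one hA hA) (le_csSup (mset_bddAbove hA hA) ?_)
  show (A - ((1:ℝ):ℂ) • A).PosSemidef
  simp [Matrix.PosSemidef.zero]

lemma mcoef_mul_le_mcoef {A B C : Mat D} (hA : A ∈ SD D) (hB : B ∈ SD D) (hC : C ∈ SD D) :
    mcoef A B * mcoef B C ≤ mcoef A C := by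
  apply le_csSup (mset_bddAbove hA hC)
  show (A - ((mcoef A B * mcoef B C : ℝ):ℂ) • C).PosSemidef
  have key : A - ((mcoef A B * mcoef B C : ℝ):ℂ) • C
      = (A - (mcoef A B : ℂ) • B) + (mcoef A B : ℂ) • (B - (mcoef B C : ℂ) • C) := by
    push_cast
    module
  rw [key]
  exact (mcoef_mem hA hB).add (psd_smul (mcoef_mem hB hC) (mcoef_nonneg hA hB))


lemma conj_trace (U : Mat D) (hU : star U * U = 1) (d : Fin D → ℂ) :
    (U * diagonal d * star U).trace = ∑ i, d i := by
  rw [trace_mul_cycle, hU, one_mul, trace_diagonal]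

lemma conj_psd (U : Mat D) {f : Fin D → ℝ} (hf : ∀ i, 0 ≤ f i) :
    (U * diagonal (fun i => (f i : ℂ)) * star U).PosSemidef := by
  rw [star_eq_conjTranspose]
  exact (PosSemidef.diagonal (fun i => by simpa [Complex.zero_le_real] using hf i)).mul_mul_conjTranspose_same U

lemma mconj_mul (U : Mat D) (hU : star U * U = 1) (d e : Fin D → ℂ) :
    (U * diagonal d * star U) * (U * diagonal e * star U) = U * diagonal (fun i => d i * e i) * star U := by
  have h : U * diagonal d * star U * (U * diagonal e * star U)
      = U * diagonal d * (star U * U) * (diagonal e * star U) := by noncomm_ring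
  rw [h, hU, mul_one, ← diagonal_mul_diagonal]
  noncomm_ring

lemma conj_sub (U : Mat D) (d e : Fin D → ℂ) :
    (U * diagonal d * star U) - (U * diagonal e * star U) = U * diagonal (fun i => d i - e i) * star U := by
  rw [← sub_mul, ← mul_sub, diagonal_sub]

section herm
variable {X : Mat D} (hX : X.IsHermitian)

lemma herm_spectral : X = (hX.eigenvectorUnitary : Mat D) *
    diagonal (fun i => ((hX.eigenvalues i : ℝ) : ℂ)) * star (hX.eigenvectorUnitary : Mat D) :=
  hX.spectral_theorem

lemma herm_U1 : (hX.eigenvectorUnitary : Mat D) * star (hX.eigenvectorUnitary : Mat D) = 1 :=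
  mem_unitaryGroup_iff.mp hX.eigenvectorUnitary.2

lemma herm_U2 : star (hX.eigenvectorUnitary : Mat D) * (hX.eigenvectorUnitary : Mat D) = 1 :=
  mem_unitaryGroup_iff'.mp hX.eigenvectorUnitary.2

lemma herm_trace : X.trace = ∑ i, ((hX.eigenvalues i : ℝ) : ℂ) := by
  conv_lhs => rw [herm_spectral hX]
  rw [conj_trace _ (herm_U2 hX)]

lemma herm_traceNorm : traceNorm X = ∑ i, |hX.eigenvalues i| := by
  set U := (hX.eigenvectorUnitary : Mat D)
  set M := U * diagonal (fun i => ((|hX.eigenvalues i| : ℝ) : ℂ)) * star U with hMdef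
  have hM : M.PosSemidef := conj_psd U fun i => abs_nonneg _
  have hsq : M ^ 2 = Xᴴ * X := by
    rw [hX.eq, pow_two, hMdef, mconj_mul U (herm_U2 hX)]
    conv_rhs => rw [herm_spectral hX, mconj_mul U (herm_U2 hX)]
    congr 1
    funext i
    simp [Pi.mul_apply, ← Complex.ofReal_mul, abs_mul_abs_self]
  have hcfc : cfc Real.sqrt (Xᴴ * X) = M := by
    have hsa : IsSelfAdjoint X := hX.isSelfAdjoint
    rw [hX.eq, ← pow_two, ← cfc_comp_pow Real.sqrt 2 X Real.continuous_sqrt.continuousOn hsa]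
    have hf : (fun x : ℝ => Real.sqrt (x ^ 2)) = fun x => |x| :=
      funext fun x => Real.sqrt_sq_eq_abs x
    rw [hf, hX.cfc_eq, IsHermitian.cfc, Unitary.conjStarAlgAut_apply, hMdef]
    rfl
  have htn : traceNorm X = (cfc Real.sqrt (Xᴴ * X)).trace.re := by
    rw [(Matrix.posSemidef_conjTranspose_mul_self X).1.cfc_eq, IsHermitian.cfc,
      Unitary.conjStarAlgAut_apply]
    rfl
  rw [htn, hcfc, hMdef, conj_trace U (herm_U2 hX)]
  simp [← Complex.ofReal_sum]

end herm

lemma sd_sum_ev {B : Mat D} (hB : B ∈ SD D) : ∑ i, hB.1.1.eigenvalues i = 1 := by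
  have h := (herm_trace hB.1.1).symm.trans hB.2
  exact_mod_cast h

lemma sd_ev_le_one {B : Mat D} (hB : B ∈ SD D) (i : Fin D) : hB.1.1.eigenvalues i ≤ 1 := by
  rw [← sd_sum_ev hB]
  exact Finset.single_le_sum (fun j _ => hB.1.eigenvalues_nonneg j) (Finset.mem_univ i)

lemma one_sub_psd {B : Mat D} (hB : B ∈ SD D) : ((1 : Mat D) - B).PosSemidef := by
  set U := (hB.1.1.eigenvectorUnitary : Mat D)
  have h1 : (1 : Mat D) = U * diagonal (fun _ => (1:ℂ)) * star U := by
    rw [diagonal_one, mul_one, herm_U1]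
  have h2 : (1 : Mat D) - B
      = U * diagonal (fun i => ((1 - hB.1.1.eigenvalues i : ℝ) : ℂ)) * star U := by
    conv_lhs => rw [h1, herm_spectral hB.1.1]
    rw [conj_sub]
    congr 1
    · congr 1
      funext i
      push_cast
      ring
  rw [h2]
  exact conj_psd U fun i => by linarith [sd_ev_le_one hB i]

lemma posdef_sub_smul_one {A : Mat D} (hA : A.PosDef) (hne : Nonempty (Fin D)) :
    ∃ c : ℝ, 0 < c ∧ (A - (c:ℂ) • (1 : Mat D)).PosSemidef := by
  haveI := hne
  have hU : (Finset.univ : Finset (Fin D)).Nonempty := Finset.univ_nonempty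
  set ev := hA.1.eigenvalues
  set c := Finset.univ.inf' hU ev with hc
  refine ⟨c, ?_, ?_⟩
  · rw [hc, Finset.lt_inf'_iff]
    exact fun i _ => hA.eigenvalues_pos i
  · set U := (hA.1.eigenvectorUnitary : Mat D)
    have h1 : (c:ℂ) • (1 : Mat D) = U * diagonal (fun _ => (c:ℂ)) * star U := by
      have hd : diagonal (fun _ : Fin D => (c:ℂ)) = (c:ℂ) • (1 : Mat D) := by
        ext i j
        by_cases h : i = j <;> simp [diagonal_apply, Matrix.one_apply, h]
      rw [hd, Matrix.mul_smul, Matrix.smul_mul, mul_one, herm_U1]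
    have h2 : A - (c:ℂ) • (1 : Mat D)
        = U * diagonal (fun i => ((ev i - c : ℝ) : ℂ)) * star U := by
      conv_lhs => rw [h1, herm_spectral hA.1]
      rw [conj_sub]
      congr 1
      · congr 1
        funext i
        push_cast
        ring
    rw [h2]
    exact conj_psd U fun i => by
      have := Finset.inf'_le ev (Finset.mem_univ i)
      linarith
  
lemma posdef_smul {A : Mat D} (hA : A.PosDef) {c : ℝ} (hc : 0 < c) :
    ((c:ℂ) • A).PosDef := by
  refine PosDef.of_dotProduct_mulVec_pos ?_ fun x hx => ?_
  · unfold Matrix.IsHermitian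
    rw [conjTranspose_smul, hA.1, Complex.star_def, Complex.conj_ofReal]
  · rw [smul_mulVec, dotProduct_smul, smul_eq_mul]
    have h1 : (0:ℂ) < (c:ℂ) := by exact_mod_cast hc
    exact mul_pos h1 (hA.dotProduct_mulVec_pos hx)

lemma sd_nonempty {A : Mat D} (hA : A ∈ SD D) : Nonempty (Fin D) := by
  by_contra h
  rw [not_nonempty_iff] at h
  have := hA.2
  rw [Matrix.trace] at this
  simp [Finset.univ_eq_empty] at this

lemma mcoef_pos_left {A B : Mat D} (hA : A.PosDef) (hA' : A ∈ SD D) (hB : B ∈ SD D) :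
    0 < mcoef A B := by
  obtain ⟨c, hc, hpsd⟩ := posdef_sub_smul_one hA (sd_nonempty hA')
  have hmem : (A - (c:ℂ) • B).PosSemidef := by
    have key : A - (c:ℂ) • B = (A - (c:ℂ) • 1) + (c:ℂ) • ((1 : Mat D) - B) := by
      module
    rw [key]
    exact hpsd.add (psd_smul (one_sub_psd hB) hc.le)
  exact lt_of_lt_of_le hc (le_csSup (mset_bddAbove hA' hB) hmem)

lemma mcoef_zero_right {A B : Mat D} (hB : B ∈ SD D) (hA : A.PosDef) (hA' : A ∈ SD D)
    (hnB : ¬ B.PosDef) : mcoef B A = 0 := by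
  refine le_antisymm (csSup_le ⟨0, zero_mem_mset hB.1⟩ fun l hl => ?_) (mcoef_nonneg hB hA')
  by_contra hpos
  push_neg at hpos
  apply hnB
  have key : B = (B - (l:ℂ) • A) + (l:ℂ) • A := by module
  rw [key]
  exact Matrix.PosDef.posSemidef_add hl (posdef_smul hA hpos)

lemma trace_Q_bound {Q A B : Mat D} (hA : A ∈ SD D) (hB : B ∈ SD D)
    (hQ : Q.PosSemidef) (hQ1 : ((1 : Mat D) - Q).PosSemidef) :
    ((Q * (A - B)).trace).re ≤ 1 - mcoef A B := by
  set l := mcoef A B with hl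
  have hl1 : l ≤ 1 := mcoef_le_one hA hB
  have hM : (A - (l:ℂ) • B).PosSemidef := mcoef_mem hA hB
  have h1 : (0:ℝ) ≤ ((Q * B).trace).re :=
    (Complex.nonneg_iff.mp (trace_mul_psd_nonneg hQ hB.1)).1
  have h2 : (0:ℝ) ≤ ((((1:Mat D) - Q) * (A - (l:ℂ) • B)).trace).re :=
    (Complex.nonneg_iff.mp (trace_mul_psd_nonneg hQ1 hM)).1
  have h3 : ((A - (l:ℂ) • B).trace) = (((1 - l : ℝ)) : ℂ) := by
    rw [trace_sub, trace_smul, hA.2, hB.2, smul_eq_mul, mul_one]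
    push_cast
    ring
  have hsplit : (((1:Mat D) - Q) * (A - (l:ℂ) • B)).trace
      = (((1 - l : ℝ)) : ℂ) - (Q * (A - (l:ℂ) • B)).trace := by
    rw [sub_mul, one_mul, trace_sub, h3]
  rw [hsplit] at h2
  have h2' : ((Q * (A - (l:ℂ) • B)).trace).re ≤ 1 - l := by
    have := congrArg Complex.re hsplit
    simp only [Complex.sub_re, Complex.ofReal_re] at h2 ⊢
    linarith [h2]
  have hdec : Q * (A - B) = Q * (A - (l:ℂ) • B) - (((1 - l:ℝ)):ℂ) • (Q * B) := by
    rw [mul_sub, mul_sub, Matrix.mul_smul]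
    push_cast
    module
  have hre : ((Q * (A - B)).trace).re
      = ((Q * (A - (l:ℂ) • B)).trace).re - (1 - l) * ((Q * B).trace).re := by
    rw [hdec, trace_sub, trace_smul]
    simp [Complex.sub_re, Complex.re_ofReal_mul]
  rw [hre]
  nlinarith [mul_nonneg (sub_nonneg.mpr hl1) h1]

lemma exists_proj {A B : Mat D} (hA : A ∈ SD D) (hB : B ∈ SD D) :
    ∃ P : Mat D, P.PosSemidef ∧ ((1 : Mat D) - P).PosSemidef ∧
      traceNorm (A - B) = 2 * ((P * (A - B)).trace).re := by
  set X := A - B with hX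
  have hherm : X.IsHermitian := hA.1.1.sub hB.1.1
  set U := (hherm.eigenvectorUnitary : Mat D)
  set ev := hherm.eigenvalues with hev
  set χ : Fin D → ℝ := fun i => if 0 < ev i then 1 else 0 with hχ
  set P := U * diagonal (fun i => ((χ i : ℝ) : ℂ)) * star U with hP
  have h1 : (1 : Mat D) = U * diagonal (fun _ => (1:ℂ)) * star U := by
    rw [diagonal_one, mul_one, herm_U1]
  refine ⟨P, conj_psd U fun i => by positivity, ?_, ?_⟩
  · have h2 : (1 : Mat D) - P
        = U * diagonal (fun i => ((1 - χ i : ℝ) : ℂ)) * star U := by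
      conv_lhs => rw [h1, hP, conj_sub]
      congr 1
      congr 1
      funext i
      push_cast
      ring
    rw [h2]
    exact conj_psd U fun i => by rw [hχ]; dsimp only; split <;> norm_num
  · -- trace of P * X
    have hXs : X = U * diagonal (fun i => ((ev i : ℝ) : ℂ)) * star U := herm_spectral hherm
    have hPX : (P * X).trace = ∑ i, ((χ i * ev i : ℝ) : ℂ) := by
      conv_lhs => rw [hP, hXs, mconj_mul U (herm_U2 hherm)]
      rw [conj_trace U (herm_U2 hherm)]
      congr 1
      funext i
      push_cast
      ring
    have hPXre : ((P * X).trace).re = ∑ i, χ i * ev i := by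
      rw [hPX, ← Complex.ofReal_sum, Complex.ofReal_re]
    have hsum0 : ∑ i, ev i = 0 := by
      have h := herm_trace hherm
      have htr : X.trace = 0 := by
        rw [hX, trace_sub, hA.2, hB.2, sub_self]
      rw [htr, ← Complex.ofReal_sum] at h
      exact_mod_cast h.symm
    have habs : ∀ i, |ev i| = 2 * (χ i * ev i) - ev i := by
      intro i
      rw [hχ]
      dsimp only
      split
      · next h => rw [abs_of_pos h]; ring
      · next h => rw [abs_of_nonpos (not_lt.mp h)]; ring
    have : traceNorm X = ∑ i, |ev i| := herm_traceNorm hherm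
    rw [this, hPXre]
    rw [Finset.sum_congr rfl fun i _ => habs i]
    rw [Finset.sum_sub_distrib, hsum0, sub_zero, ← Finset.mul_sum]


lemma half_traceNorm_le_dmet {A B : Mat D} (hA : A ∈ SD D) (hB : B ∈ SD D) :
    (1/2) * traceNorm (A - B) ≤ dmet A B := by
  obtain ⟨P, hP, hP1, htn⟩ := exists_proj hA hB
  set t := ((P * (A - B)).trace).re with ht
  have hb1 : t ≤ 1 - mcoef A B := trace_Q_bound hA hB hP hP1
  have hP' : ((1 : Mat D) - ((1 : Mat D) - P)).PosSemidef := by simpa using hP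
  have hb2 : t ≤ 1 - mcoef B A := by
    have h := trace_Q_bound hB hA hP1 hP'
    have hkey : (((1:Mat D) - P) * (B - A)).trace = (P * (A - B)).trace := by
      have hmm : ((1:Mat D) - P) * (B - A) = (B - A) + P * (A - B) := by noncomm_ring
      rw [hmm, trace_add, trace_sub, hB.2, hA.2, sub_self, zero_add]
    rwa [hkey] at h
  set l := mcoef A B with hl
  set m := mcoef B A with hm
  have hl0 : 0 ≤ l := mcoef_nonneg hA hB
  have hl1 : l ≤ 1 := mcoef_le_one hA hB
  have hm0 : 0 ≤ m := mcoef_nonneg hB hA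
  have hm1 : m ≤ 1 := mcoef_le_one hB hA
  have hpos : (0:ℝ) < 1 + l * m := by nlinarith
  rw [htn, dmet, ← hl, ← hm, le_div_iff₀ hpos]
  rcases le_total l m with h | h
  · nlinarith [mul_nonneg hm0 (sq_nonneg (1 - l)),
      mul_nonneg (mul_nonneg hl0 hm0) (sub_nonneg.mpr h)]
  · nlinarith [mul_nonneg hl0 (sq_nonneg (1 - m)),
      mul_nonneg (mul_nonneg hl0 hm0) (sub_nonneg.mpr h)]

lemma dmet_triangle_num {x y z : ℝ} (hx0 : 0 ≤ x) (hx1 : x ≤ 1) (hy0 : 0 ≤ y) (hy1 : y ≤ 1)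
    (hz0 : 0 ≤ z) (hxy : x * y ≤ z) :
    (1 - z)/(1 + z) ≤ (1 - x)/(1 + x) + (1 - y)/(1 + y) := by
  have hx : (0:ℝ) < 1 + x := by linarith
  have hy : (0:ℝ) < 1 + y := by linarith
  have hz : (0:ℝ) < 1 + z := by linarith
  have hxy0 : (0:ℝ) ≤ x * y := mul_nonneg hx0 hy0
  have hxy2 : x * y ≤ 1 := by nlinarith
  have hxy1 : (0:ℝ) < 1 + x*y := by nlinarith
  have step1 : (1 - z)/(1 + z) ≤ (1 - x*y)/(1 + x*y) := by
    rw [div_le_div_iff₀ hz hxy1]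
    nlinarith
  refine step1.trans ?_
  rw [div_add_div _ _ (ne_of_gt hx) (ne_of_gt hy), div_le_div_iff₀ hxy1 (by positivity)]
  nlinarith [mul_nonneg (mul_nonneg (sub_nonneg.mpr hx1) (sub_nonneg.mpr hy1))
    (sub_nonneg.mpr hxy2)]


end AuxStmt1

/-- `d` is a metric on `𝕊_D` with the listed properties. -/
theorem stmt1 (D : ℕ) :
    (∀ A ∈ SD D, ∀ B ∈ SD D, 0 ≤ dmet A B) ∧
    (∀ A ∈ SD D, ∀ B ∈ SD D, (dmet A B = 0 ↔ A = B)) ∧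
    (∀ A ∈ SD D, ∀ B ∈ SD D, dmet A B = dmet B A) ∧
    (∀ A ∈ SD D, ∀ B ∈ SD D, ∀ C ∈ SD D, dmet A C ≤ dmet A B + dmet B C) ∧
    (∀ A ∈ SD D, ∀ B ∈ SD D,
      (1 / 2) * traceNorm (A - B) ≤ dmet A B ∧ dmet A B ≤ 1) ∧
    (∀ A ∈ SDo D, ∀ B ∈ SDo D, dmet A B < 1) ∧
    (∀ A ∈ SDo D, ∀ B ∈ SD D, (dmet A B = 1 ↔ B ∈ SD D \ SDo D)) := by
  have hsdo : ∀ A ∈ SDo D, A ∈ SD D := fun A hA => ⟨hA.1.posSemidef, hA.2⟩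
  have hbase : ∀ A ∈ SD D, ∀ B ∈ SD D, 0 ≤ mcoef A B * mcoef B A ∧ mcoef A B * mcoef B A ≤ 1 :=
    fun A hA B hB => ⟨mul_nonneg (mcoef_nonneg hA hB) (mcoef_nonneg hB hA), mcoef_mul_le_one hA hB⟩
  refine ⟨?_, ?_, ?_, ?_, ?_, ?_, ?_⟩
  · intro A hA B hB
    obtain ⟨h0, h1⟩ := hbase A hA B hB
    exact div_nonneg (by linarith) (by linarith)
  · intro A hA B hB
    obtain ⟨h0, h1⟩ := hbase A hA B hB
    constructor
    · intro h
      rw [dmet, div_eq_zero_iff] at h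
      rcases h with h | h
      · exact mcoef_eq_one_of_mul_eq_one hA hB (by linarith)
      · linarith
    · rintro rfl
      rw [dmet, mcoef_self hA]
      norm_num
  · intro A hA B hB
    rw [dmet, dmet, mul_comm]
  · intro A hA B hB C hC
    obtain ⟨hx0, hx1⟩ := hbase A hA B hB
    obtain ⟨hy0, hy1⟩ := hbase B hB C hC
    obtain ⟨hz0, hz1⟩ := hbase A hA C hC
    refine dmet_triangle_num hx0 hx1 hy0 hy1 hz0 ?_
    have h1 : mcoef A B * mcoef B C ≤ mcoef A C := mcoef_mul_le_mcoef hA hB hC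
    have h2 : mcoef C B * mcoef B A ≤ mcoef C A := mcoef_mul_le_mcoef hC hB hA
    have h3 : (mcoef A B * mcoef B C) * (mcoef C B * mcoef B A) ≤ mcoef A C * mcoef C A :=
      mul_le_mul h1 h2 (mul_nonneg (mcoef_nonneg hC hB) (mcoef_nonneg hB hA))
        (mcoef_nonneg hA hC)
    calc (mcoef A B * mcoef B A) * (mcoef B C * mcoef C B)
        = (mcoef A B * mcoef B C) * (mcoef C B * mcoef B A) := by ring
      _ ≤ mcoef A C * mcoef C A := h3
  · intro A hA B hB
    obtain ⟨h0, h1⟩ := hbase A hA B hB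
    refine ⟨half_traceNorm_le_dmet hA hB, ?_⟩
    rw [dmet, div_le_one (by linarith)]
    linarith
  · intro A hA B hB
    have hm : 0 < mcoef A B * mcoef B A :=
      mul_pos (mcoef_pos_left hA.1 (hsdo A hA) (hsdo B hB))
        (mcoef_pos_left hB.1 (hsdo B hB) (hsdo A hA))
    rw [dmet, div_lt_one (by linarith)]
    linarith
  · intro A hA B hB
    have hA' := hsdo A hA
    obtain ⟨h0, h1⟩ := hbase A hA' B hB
    have hpos : (0:ℝ) < 1 + mcoef A B * mcoef B A := by linarith
    constructor
    · intro h
      rw [dmet, div_eq_one_iff_eq (ne_of_gt hpos)] at h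
      have hm0 : mcoef A B * mcoef B A = 0 := by linarith
      refine ⟨hB, fun hBo => ?_⟩
      have hl : 0 < mcoef A B := mcoef_pos_left hA.1 hA' hB
      have hmu : 0 < mcoef B A := mcoef_pos_left hBo.1 (hsdo B hBo) hA'
      nlinarith
    · rintro ⟨-, hBn⟩
      have hnB : ¬ B.PosDef := fun hd => hBn ⟨hd, hB.2⟩
      rw [dmet, mcoef_zero_right hB hA.1 hA' hnB]
      norm_num


end
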